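/- Let k, m be positive integers with gcd(k, m) = 1, let q = 2^k, and let α ∈ F_{2^m} be such that the polynomial φ_{q,α}(x) = x^{q+1} + x + α has no root in F_{2^m}. Let a, b, c, d ∈ F_{2^m} with a·d + b·c ≠ 0. Then the polynomial φ(x) = (c·x + d)^{q+1} + (c·x + d)·(a·x + b)^q + α·(a·x + b)^{q+1} has no root in F_{2^m}. -/

import Mathlib

/-- If φ_{q,α}(x) = x^{q+1} + x + α has no root in F_{2^m} and
a·d + b·c ≠ 0, then φ(x) = (c·x + d)^{q+1} + (c·x + d)·(a·x + b)^q + α·(a·x + b)^{q+1}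
has no root in F_{2^m}. -/
theorem stmt_3 (k m : ℕ) (hk : 0 < k) (hm : 0 < m) (hgcd : Nat.gcd k m = 1)
    (K : Type*) [Field K] [Fintype K] [CharP K 2] (hcard : Fintype.card K = 2 ^ m)
    (q : ℕ) (hq : q = 2 ^ k) (α : K)
    (hα : ∀ x : K, x ^ (q + 1) + x + α ≠ 0)
    (a b c d : K) (hdet : a * d + b * c ≠ 0) :
    ∀ x : K,
      (c * x + d) ^ (q + 1) + (c * x + d) * (a * x + b) ^ q
        + α * (a * x + b) ^ (q + 1) ≠ 0 := by
  intro x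
  have h2 : (2 : K) = 0 := by
    have := CharP.cast_eq_zero K 2
    simpa using this
  have hq0 : q ≠ 0 := by subst hq; positivity
  set u := a * x + b with hu
  set v := c * x + d with hv
  have hkey : a * d + b * c = a * v + c * u := by
    rw [hu, hv]; linear_combination (-(a * c * x)) * h2
  by_cases huz : u = 0
  · have hvz : v ≠ 0 := by
      intro hvz
      apply hdet
      rw [hkey, huz, hvz]; ring
    rw [huz, zero_pow hq0, zero_pow (by simp : q + 1 ≠ 0)]
    intro h
    apply hvz
    have : v ^ (q + 1) = 0 := by linear_combination h
    exact pow_eq_zero_iff (by simp) |>.mp this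
  · intro h
    apply hα (v / u)
    have hfac : (v / u) ^ (q + 1) + v / u + α
        = (v ^ (q + 1) + v * u ^ q + α * u ^ (q + 1)) / u ^ (q + 1) := by
      rw [div_pow]
      field_simp
      ring
    rw [hfac, h, zero_div]
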